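/- Let (w*, b*, u*) be a P-stationary point with parameter γ > 0 and associated multiplier λ* ∈ ℝ^m, and define the index set T* = {i : 0 < u*_i − γλ*_i ≤ √(2γC)}. Then every L_{0/1} support vector lies on a support hyperplane: for every i ∈ T*, y_i(⟨w*, x_i⟩ + b*) = 1, i.e., ⟨w*, x_i⟩ + b* = ±1. -/
import Mathlib


open Finset

noncomputable def l01norm {m : ℕ} (v : Fin m → ℝ) : ℕ :=
  (Finset.univ.filter fun i => 0 < v i).card

/-- `(w, b, u)` is a P-stationary point with parameter `γ > 0` and multiplier
`lam` of the problem `min (1/2)‖w‖² + C‖u₊‖₀ s.t. u + Aw + by = 1`. -/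
def IsPStationary {m n : ℕ} (A : Matrix (Fin m) (Fin n) ℝ) (y : Fin m → ℝ)
    (C γ : ℝ) (w : Fin n → ℝ) (b : ℝ) (u : Fin m → ℝ) (lam : Fin m → ℝ) : Prop :=
  (∀ j, w j + ∑ i, A i j * lam i = 0) ∧
  (∑ i, y i * lam i = 0) ∧
  (∀ i, u i + A.mulVec w i + b * y i = 1) ∧
  (∀ i, (0 < u i - γ * lam i ∧ u i - γ * lam i ≤ Real.sqrt (2 * γ * C)) →
      u i = 0) ∧
  (∀ i, ¬(0 < u i - γ * lam i ∧ u i - γ * lam i ≤ Real.sqrt (2 * γ * C)) →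
      u i = u i - γ * lam i)

/-- every `L_{0/1}` support vector lies on a support hyperplane:
for `i ∈ T*`, `y_i(⟨w*, x_i⟩ + b*) = 1`, i.e. `⟨w*, x_i⟩ + b* = ±1`. -/
theorem PStationary_support_vectors_on_hyperplanes {m n : ℕ}
    (x : Fin m → Fin n → ℝ) (y : Fin m → ℝ) (hy : ∀ i, y i = 1 ∨ y i = -1)
    (A : Matrix (Fin m) (Fin n) ℝ) (hA : ∀ i j, A i j = y i * x i j)
    (C : ℝ) (hC : 0 < C) (γ : ℝ) (hγ : 0 < γ)
    (wstar : Fin n → ℝ) (bstar : ℝ) (ustar : Fin m → ℝ) (lam : Fin m → ℝ)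
    (hstat : IsPStationary A y C γ wstar bstar ustar lam)
    (Tstar : Set (Fin m))
    (hT : Tstar = {i | 0 < ustar i - γ * lam i ∧
        ustar i - γ * lam i ≤ Real.sqrt (2 * γ * C)}) :
    ∀ i ∈ Tstar,
      y i * ((∑ j, wstar j * x i j) + bstar) = 1 ∧
      ((∑ j, wstar j * x i j) + bstar = 1 ∨ (∑ j, wstar j * x i j) + bstar = -1) := by
  intro i hi
  obtain ⟨h1, h2, h3, h4, h5⟩ := hstat
  rw [hT] at hi
  have hu : ustar i = 0 := h4 i hi
  have hfeas := h3 i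
  rw [hu] at hfeas
  have hmv : A.mulVec wstar i = y i * ∑ j, wstar j * x i j := by
    simp only [Matrix.mulVec, dotProduct]
    rw [Finset.mul_sum]
    apply Finset.sum_congr rfl
    intro j _
    simp only [hA]; ring
  have hkey : y i * ((∑ j, wstar j * x i j) + bstar) = 1 := by
    rw [mul_add]
    rw [hmv] at hfeas
    linarith [hfeas]
  refine ⟨hkey, ?_⟩
  rcases hy i with h | h <;> rw [h] at hkey
  · left; linarith
  · right; linarith
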